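/- arXiv:1312.0842 — 3 statements merged into one kernel-verified Lean document; each statement's English description precedes it below -/
import Mathlib

section
/- Let m ≥ 1 and suppose integers c_1, c_3, c_5, ..., c_{4m-1} (indexed by odd i with 1 ≤ i ≤ 4m-1) satisfy ∑_{i odd} c_i · 2^i · C(4m, i) = 0. Then c_1 is even. -/
theorem stmt2 (m : ℕ) (hm : 1 ≤ m) (c : ℕ → ℤ)
    (h : ∑ i ∈ (Finset.range (4 * m)).filter (fun i => Odd i),
      c i * 2 ^ i * (Nat.choose (4 * m) i : ℤ) = 0) :
    2 ∣ c 1 := by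
  have hm0 : m ≠ 0 := by omega
  set v := m.factorization 2 with hv
  set u := m / 2 ^ v with hu
  have hmu : 2 ^ v * u = m := Nat.ordProj_mul_ordCompl_eq_self m 2
  have hu_odd : ¬ (2 ∣ u) := Nat.not_dvd_ordCompl Nat.prime_two hm0
  set s := (Finset.range (4 * m)).filter (fun i => Odd i) with hs
  have h1 : (1 : ℕ) ∈ s := by
    simp [hs, Finset.mem_filter]
    omega
  have key : ∀ i ∈ s.erase 1,
      (2 ^ (v + 4) : ℤ) ∣ c i * 2 ^ i * (Nat.choose (4 * m) i : ℤ) := by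
    intro i hi
    have hne : i ≠ 1 := (Finset.mem_erase.mp hi).1
    have hmem := (Finset.mem_erase.mp hi).2
    rw [hs, Finset.mem_filter, Finset.mem_range] at hmem
    obtain ⟨hilt, hodd⟩ := hmem
    have hi2 : i % 2 = 1 := Nat.odd_iff.mp hodd
    have hi3 : 3 ≤ i := by omega
    -- choose identity: 4m * C(4m-1, i-1) = C(4m, i) * i
    have hid : 4 * m * Nat.choose (4 * m - 1) (i - 1) = Nat.choose (4 * m) i * i := by
      have := Nat.add_one_mul_choose_eq (4 * m - 1) (i - 1)
      have h4m : 4 * m - 1 + 1 = 4 * m := by omega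
      have hi1 : i - 1 + 1 = i := by omega
      rw [h4m, hi1] at this
      exact this
    have hdvd4m : 2 ^ (v + 2) ∣ 4 * m := by
      refine ⟨u, ?_⟩
      rw [← hmu]; ring
    have hdvdmul : 2 ^ (v + 2) ∣ Nat.choose (4 * m) i * i := by
      rw [← hid]
      exact Dvd.dvd.mul_right hdvd4m _
    have hcop : Nat.Coprime (2 ^ (v + 2)) i := by
      apply Nat.Coprime.pow_left
      rw [Nat.prime_two.coprime_iff_not_dvd]
      omega
    have hdvdC : 2 ^ (v + 2) ∣ Nat.choose (4 * m) i :=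
      hcop.dvd_of_dvd_mul_right hdvdmul
    have hdvdCZ : (2 ^ (v + 2) : ℤ) ∣ (Nat.choose (4 * m) i : ℤ) := by
      exact_mod_cast Int.natCast_dvd_natCast.mpr hdvdC
    have : (2 ^ (v + 4) : ℤ) ∣ (2 ^ i : ℤ) * (Nat.choose (4 * m) i : ℤ) := by
      obtain ⟨w, hw⟩ := hdvdCZ
      refine ⟨2 ^ (i - 2) * w, ?_⟩
      rw [hw]
      have : (2 : ℤ) ^ i = 2 ^ 2 * 2 ^ (i - 2) := by
        rw [← pow_add]; congr 1; omega
      rw [this]; ring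
    calc (2 ^ (v + 4) : ℤ) ∣ (2 ^ i : ℤ) * (Nat.choose (4 * m) i : ℤ) := this
      _ ∣ c i * 2 ^ i * (Nat.choose (4 * m) i : ℤ) := ⟨c i, by ring⟩
  have hsum : ∑ i ∈ s.erase 1, c i * 2 ^ i * (Nat.choose (4 * m) i : ℤ)
      + c 1 * 2 ^ 1 * (Nat.choose (4 * m) 1 : ℤ) = 0 := by
    rw [Finset.sum_erase_add s _ h1]; exact h
  have hdvdsum : (2 ^ (v + 4) : ℤ) ∣
      ∑ i ∈ s.erase 1, c i * 2 ^ i * (Nat.choose (4 * m) i : ℤ) :=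
    Finset.dvd_sum key
  have hdvd1 : (2 ^ (v + 4) : ℤ) ∣ c 1 * 2 ^ 1 * (Nat.choose (4 * m) 1 : ℤ) := by
    have : c 1 * 2 ^ 1 * (Nat.choose (4 * m) 1 : ℤ)
        = - ∑ i ∈ s.erase 1, c i * 2 ^ i * (Nat.choose (4 * m) i : ℤ) := by
      linarith
    rw [this]
    exact dvd_neg.mpr hdvdsum
  rw [Nat.choose_one_right] at hdvd1
  have hexp : c 1 * 2 ^ 1 * ((4 * m : ℕ) : ℤ) = 2 ^ (v + 3) * (c 1 * (u : ℤ)) := by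
    have : ((4 * m : ℕ) : ℤ) = 4 * ((2 ^ v * u : ℕ) : ℤ) := by rw [hmu]; push_cast; ring
    rw [this]; push_cast; ring
  rw [hexp] at hdvd1
  have h2 : (2 : ℤ) ∣ c 1 * (u : ℤ) := by
    have hne : (2 : ℤ) ^ (v + 3) ≠ 0 := by positivity
    have : (2 : ℤ) ^ (v + 4) = 2 ^ (v + 3) * 2 := by rw [pow_succ]
    rw [this] at hdvd1
    exact (mul_dvd_mul_iff_left hne).mp hdvd1
  rcases (Int.prime_two.dvd_mul.mp h2) with h' | h'
  · exact h'
  · exfalso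
    exact hu_odd (Int.natCast_dvd_natCast.mp (by exact_mod_cast h'))
end

section
/- Let m ≥ 3 and suppose integers c_1, c_3, ..., c_{2m-1} (indexed by odd i with 1 ≤ i ≤ 2m-1) satisfy ∑_{i odd, i ≤ 2m-2} c_i · 2^i · C(2m, i) + c_{2m-1} · 2^{2m-1} = 0. Then c_1 is even. -/
lemma choose_dvd_aux (m k u i : ℕ) (hm : m = 2 ^ k * u) (hi : Odd i) :
    2 ^ (k + 1) ∣ Nat.choose (2 * m) i := by
  obtain ⟨j, rfl⟩ := hi
  have key : 2 * m * Nat.choose (2 * m - 1) (2 * j) = Nat.choose (2 * m) (2 * j + 1) * (2 * j + 1) := by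
    rcases m with _ | n
    · simp
    · have : 2 * (n + 1) = (2 * n + 1) + 1 := by ring
      rw [this, Nat.add_sub_cancel]
      exact Nat.add_one_mul_choose_eq (2 * n + 1) (2 * j)
  have hdvd : 2 ^ (k + 1) ∣ Nat.choose (2 * m) (2 * j + 1) * (2 * j + 1) := by
    rw [← key, hm]
    exact Dvd.dvd.mul_right ⟨u, by ring⟩ _
  have hcop : Nat.Coprime (2 ^ (k + 1)) (2 * j + 1) :=
    Nat.Coprime.pow_left _ (Nat.coprime_two_left.mpr ⟨j, rfl⟩)
  exact (Nat.Coprime.dvd_of_dvd_mul_right hcop hdvd)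

theorem stmt3 (m : ℕ) (hm : 3 ≤ m) (c : ℕ → ℤ)
    (h : ∑ i ∈ (Finset.range (2 * m - 1)).filter (fun i => Odd i),
        c i * 2 ^ i * (Nat.choose (2 * m) i : ℤ)
      + c (2 * m - 1) * 2 ^ (2 * m - 1) = 0) :
    2 ∣ c 1 := by
  obtain ⟨k, u, hu, hmeq⟩ := Nat.exists_eq_pow_mul_and_not_dvd (show m ≠ 0 by omega) 2 (by norm_num)
  set s : Finset ℕ := (Finset.range (2 * m - 1)).filter (fun i => Odd i) with hs
  have h1mem : 1 ∈ s := by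
    simp only [hs, Finset.mem_filter, Finset.mem_range]
    exact ⟨by omega, odd_one⟩
  have hsplit : ∑ i ∈ s.erase 1, c i * 2 ^ i * (Nat.choose (2 * m) i : ℤ)
      + c 1 * 2 ^ 1 * (Nat.choose (2 * m) 1 : ℤ)
    = ∑ i ∈ s, c i * 2 ^ i * (Nat.choose (2 * m) i : ℤ) :=
    Finset.sum_erase_add s _ h1mem
  -- k is small: 2^k ≤ m, so k ≤ m - 1 ≤ 2m - 4
  have hk2 : 2 ^ k ≤ m := by
    rw [hmeq]; exact Nat.le_mul_of_pos_right _ (Nat.pos_of_ne_zero (by rintro rfl; exact hu ⟨0, rfl⟩))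
  have hkm : k + 3 ≤ 2 * m - 1 := by
    have := Nat.lt_pow_self (n := k) (by norm_num : 1 < 2)
    omega
  -- divisibility of the tail terms
  have hdvd_erase : (2 : ℤ) ^ (k + 3) ∣
      ∑ i ∈ s.erase 1, c i * 2 ^ i * (Nat.choose (2 * m) i : ℤ) := by
    apply Finset.dvd_sum
    intro i hi
    have hi1 : i ≠ 1 := Finset.ne_of_mem_erase hi
    have hi2 := Finset.mem_of_mem_erase hi
    simp only [hs, Finset.mem_filter, Finset.mem_range] at hi2
    obtain ⟨hilt, hiodd⟩ := hi2
    have hi3 : 3 ≤ i := by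
      rcases hiodd with ⟨j, rfl⟩; omega
    have hch : (2 : ℤ) ^ (k + 1) ∣ (Nat.choose (2 * m) i : ℤ) := by
      have := choose_dvd_aux m k u i hmeq hiodd
      exact_mod_cast Int.natCast_dvd_natCast.mpr this
    have h2i : (2 : ℤ) ^ 2 ∣ (2 : ℤ) ^ i := pow_dvd_pow 2 (by omega)
    calc (2 : ℤ) ^ (k + 3) = 2 ^ 2 * 2 ^ (k + 1) := by ring
      _ ∣ 2 ^ i * (Nat.choose (2 * m) i : ℤ) := mul_dvd_mul h2i hch
      _ ∣ c i * 2 ^ i * (Nat.choose (2 * m) i : ℤ) := ⟨c i, by ring⟩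
  have hdvd_last : (2 : ℤ) ^ (k + 3) ∣ c (2 * m - 1) * 2 ^ (2 * m - 1) :=
    Dvd.dvd.mul_left (pow_dvd_pow 2 hkm) _
  have hmain : (2 : ℤ) ^ (k + 3) ∣ c 1 * 2 ^ 1 * (Nat.choose (2 * m) 1 : ℤ) := by
    have : c 1 * 2 ^ 1 * (Nat.choose (2 * m) 1 : ℤ)
        = -(∑ i ∈ s.erase 1, c i * 2 ^ i * (Nat.choose (2 * m) i : ℤ))
          - c (2 * m - 1) * 2 ^ (2 * m - 1) := by
      rw [← hsplit] at h; linarith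
    rw [this]
    exact dvd_sub (dvd_neg.mpr hdvd_erase) hdvd_last
  -- rewrite the main term
  have hval : c 1 * 2 ^ 1 * (Nat.choose (2 * m) 1 : ℤ) = 2 ^ (k + 2) * (c 1 * u) := by
    rw [Nat.choose_one_right, hmeq]
    push_cast
    ring
  rw [hval] at hmain
  have hmain2 : (2 : ℤ) ^ (k + 2) * 2 ∣ 2 ^ (k + 2) * (c 1 * u) := by
    have : (2 : ℤ) ^ (k + 3) = 2 ^ (k + 2) * 2 := by ring
    rwa [this] at hmain
  have h2 : (2 : ℤ) ∣ c 1 * u :=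
    (mul_dvd_mul_iff_left (by positivity : (2 : ℤ) ^ (k + 2) ≠ 0)).mp hmain2
  rcases Int.prime_two.dvd_mul.mp h2 with h | h
  · exact h
  · exfalso
    exact hu (by exact_mod_cast h)
end

section
/- Let A ⊆ B be free abelian groups of finite rank with B/A finite. Let I and Ĩ be the augmentation ideals of Z[A] and Z[B] respectively. Then Z[A] ∩ Ĩ² = I². -/
/-- The augmentation map of the integral group ring `ℤ[A]`. -/
noncomputable def augMap (A : Type) [AddCommGroup A] :
    AddMonoidAlgebra ℤ A →ₐ[ℤ] ℤ :=
  AddMonoidAlgebra.lift ℤ ℤ A 1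

/-- The augmentation ideal of `ℤ[A]`. -/
noncomputable def augIdeal (A : Type) [AddCommGroup A] : Ideal (AddMonoidAlgebra ℤ A) :=
  RingHom.ker (augMap A).toRingHom

open AddMonoidAlgebra Finsupp

set_option synthInstance.maxHeartbeats 1000000
set_option maxHeartbeats 1000000

lemma AMA_single {A : Type} [AddCommGroup A] (a : A) (n : ℤ) :
    (AddMonoidAlgebra.single a n : AddMonoidAlgebra ℤ A) = AddMonoidAlgebra.ofCoeff (Finsupp.single a n) := rfl

lemma mapDRH {A B : Type} [AddCommGroup A] [AddCommGroup B] (ι : A →+ B)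
    (x : AddMonoidAlgebra ℤ A) :
    AddMonoidAlgebra.mapDomainRingHom ℤ ι x = AddMonoidAlgebra.mapDomain ι x := rfl

noncomputable def eMap (A : Type) [AddCommGroup A] : AddMonoidAlgebra ℤ A →ₗ[ℤ] A :=
  Finsupp.linearCombination ℤ (id : A → A) ∘ₗ (AddMonoidAlgebra.coeffLinearEquiv ℤ).toLinearMap

lemma eMap_single (A : Type) [AddCommGroup A] (a : A) (n : ℤ) :
    eMap A (AddMonoidAlgebra.single a n) = n • a := by
  show Finsupp.linearCombination ℤ id (Finsupp.single a n) = n • a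
  erw [Finsupp.linearCombination_single]
  simp

lemma augMap_single (A : Type) [AddCommGroup A] (a : A) (n : ℤ) :
    augMap A (AddMonoidAlgebra.single a n) = n := by
  simp [augMap, AddMonoidAlgebra.lift_single]

lemma mem_augIdeal {A : Type} [AddCommGroup A] (x : AddMonoidAlgebra ℤ A) :
    x ∈ augIdeal A ↔ augMap A x = 0 := RingHom.mem_ker

lemma eMap_mul (A : Type) [AddCommGroup A] (x y : AddMonoidAlgebra ℤ A) :
    eMap A (x * y) = augMap A x • eMap A y + augMap A y • eMap A x := by
  induction x using AddMonoidAlgebra.induction_linear with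
  | zero => simp
  | add p q hp hq =>
      rw [add_mul, map_add, hp, hq, map_add, map_add]
      module
  | single a n =>
      induction y using AddMonoidAlgebra.induction_linear with
      | zero => simp
      | add p q hp hq =>
          rw [mul_add, map_add, hp, hq, map_add, map_add]
          module
      | single b m =>
          rw [AddMonoidAlgebra.single_mul_single, eMap_single, eMap_single, eMap_single,
            augMap_single, augMap_single, smul_add]
          module

lemma eMap_vanish {A : Type} [AddCommGroup A] (x : AddMonoidAlgebra ℤ A)
    (hx : x ∈ (augIdeal A) ^ 2) : eMap A x = 0 := by
  rw [pow_two] at hx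
  refine Submodule.mul_induction_on hx ?_ ?_
  · intro p hp q hq
    rw [eMap_mul, (mem_augIdeal p).1 hp, (mem_augIdeal q).1 hq]
    simp
  · intro p q hp hq; rw [map_add, hp, hq, add_zero]

noncomputable def deltaMap (A : Type) [AddCommGroup A] :
    A →+ (AddMonoidAlgebra ℤ A ⧸ (augIdeal A) ^ 2) where
  toFun a := Ideal.Quotient.mk _ (AddMonoidAlgebra.single a 1 - 1)
  map_zero' := by simp [AddMonoidAlgebra.one_def]
  map_add' a b := by
    rw [← map_add, Ideal.Quotient.mk_eq_mk_iff_sub_mem]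
    have key : AddMonoidAlgebra.single (a + b) (1:ℤ) - 1 -
        (AddMonoidAlgebra.single a 1 - 1 + (AddMonoidAlgebra.single b 1 - 1)) =
        (AddMonoidAlgebra.single a 1 - 1) * (AddMonoidAlgebra.single b 1 - 1) := by
      simp only [sub_mul, mul_sub, AddMonoidAlgebra.one_def,
        AddMonoidAlgebra.single_mul_single, one_mul, mul_one, zero_add, add_zero]
      abel
    rw [key, pow_two]
    apply Ideal.mul_mem_mul
    · rw [mem_augIdeal, map_sub, augMap_single, map_one, sub_self]
    · rw [mem_augIdeal, map_sub, augMap_single, map_one, sub_self]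

lemma mk_eq (A : Type) [AddCommGroup A] (x : AddMonoidAlgebra ℤ A) :
    Ideal.Quotient.mk ((augIdeal A) ^ 2) x =
      deltaMap A (eMap A x) + (augMap A x) • Ideal.Quotient.mk ((augIdeal A) ^ 2) 1 := by
  induction x using AddMonoidAlgebra.induction_linear with
  | zero => simp
  | add p q hp hq =>
      rw [map_add, hp, hq, map_add, map_add, map_add]
      module
  | single a n =>
      rw [eMap_single, augMap_single, map_zsmul]
      have : (Ideal.Quotient.mk ((augIdeal A) ^ 2)) (AddMonoidAlgebra.single a n)
          = n • (Ideal.Quotient.mk ((augIdeal A) ^ 2)) (AddMonoidAlgebra.single a 1) := by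
        rw [← map_zsmul]
        congr 1
        rw [AddMonoidAlgebra.smul_single]
        norm_num
      rw [this]
      have hd : (Ideal.Quotient.mk ((augIdeal A) ^ 2)) (AddMonoidAlgebra.single a 1)
          = deltaMap A a + (Ideal.Quotient.mk ((augIdeal A) ^ 2)) 1 := by
        show _ = Ideal.Quotient.mk _ (AddMonoidAlgebra.single a 1 - 1) + _
        rw [← map_add, sub_add_cancel]
      rw [hd, smul_add]

lemma mem_sq_of {A : Type} [AddCommGroup A] (x : AddMonoidAlgebra ℤ A)
    (h1 : augMap A x = 0) (h2 : eMap A x = 0) : x ∈ (augIdeal A) ^ 2 := by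
  have := mk_eq A x
  rw [h1, h2, map_zero, zero_smul, add_zero] at this
  rwa [← Ideal.Quotient.eq_zero_iff_mem]

lemma augMap_mapDomain {A B : Type} [AddCommGroup A] [AddCommGroup B] (ι : A →+ B)
    (x : AddMonoidAlgebra ℤ A) :
    augMap B (AddMonoidAlgebra.mapDomainRingHom ℤ ι x) = augMap A x := by
  induction x using AddMonoidAlgebra.induction_linear with
  | zero => simp
  | add p q hp hq => rw [map_add, map_add, map_add, hp, hq]
  | single a n =>
      rw [mapDRH]
      rw [AddMonoidAlgebra.mapDomain_single]
      rw [augMap_single, augMap_single]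

lemma eMap_mapDomain {A B : Type} [AddCommGroup A] [AddCommGroup B] (ι : A →+ B)
    (x : AddMonoidAlgebra ℤ A) :
    eMap B (AddMonoidAlgebra.mapDomainRingHom ℤ ι x) = ι (eMap A x) := by
  rw [mapDRH]
  show Finsupp.linearCombination ℤ id (Finsupp.mapDomain ι x.coeff) =
    ι (Finsupp.linearCombination ℤ id x.coeff)
  erw [Finsupp.linearCombination_mapDomain,
    ← Finsupp.apply_linearCombination ℤ ι.toIntLinearMap id x.coeff]
  rfl

theorem stmt11 (A B : Type) [AddCommGroup A] [AddCommGroup B]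
    [Module.Free ℤ A] [Module.Finite ℤ A] [Module.Free ℤ B] [Module.Finite ℤ B]
    (ι : A →+ B) (hι : Function.Injective ι) (hfin : Finite (B ⧸ ι.range)) :
    Ideal.comap (AddMonoidAlgebra.mapDomainRingHom ℤ ι) ((augIdeal B) ^ 2)
      = (augIdeal A) ^ 2 := by
  apply le_antisymm
  · intro x hx
    rw [Ideal.mem_comap] at hx
    have h1 : augMap A x = 0 := by
      rw [← augMap_mapDomain ι x]
      have : AddMonoidAlgebra.mapDomainRingHom ℤ ι x ∈ augIdeal B := by
        have : (augIdeal B) ^ 2 ≤ augIdeal B := by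
          rw [pow_two]; exact Ideal.mul_le_right
        exact this hx
      rwa [mem_augIdeal] at this
    have h2 : eMap A x = 0 := by
      apply hι
      rw [← eMap_mapDomain ι x, map_zero]
      exact eMap_vanish _ hx
    exact mem_sq_of x h1 h2
  · rw [← Ideal.map_le_iff_le_comap, Ideal.map_pow]
    apply Ideal.pow_right_mono
    rw [Ideal.map_le_iff_le_comap]
    intro x hx
    rw [Ideal.mem_comap, mem_augIdeal, augMap_mapDomain]
    rwa [mem_augIdeal] at hx
end
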